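/- Let Y be a symmetric real random variable with all finite moments and E[Y²] = 1, E[Y⁴] = 3 (matching the standard Gaussian), let σ, t ≥ 0, and define X₁(w, x) = (√x + wσ/2)² for x ≥ 0. Then for every polynomial f of degree at most L, x ↦ E[f(X₁(√t·Y, x))] is a polynomial of degree at most L; moreover, writing ‖∑ a_j x^j‖ = ∑ |a_j|, there is a constant C depending only on σ, T, L, E[Y^{2L}] such that ‖E[f(X₁(√t·Y, ·))]‖ ≤ (1 + C t)‖f‖ for all t ∈ [0, T]. -/
import Mathlib


open MeasureTheory

/-- The norm `‖∑ a_j x^j‖ = ∑ |a_j|` on polynomials. -/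
noncomputable def polyNorm (p : Polynomial ℝ) : ℝ :=
  ∑ j ∈ Finset.range (p.natDegree + 1), |p.coeff j|

lemma polyNorm_eq_of_le {p : Polynomial ℝ} {L : ℕ} (h : p.natDegree ≤ L) :
    polyNorm p = ∑ j ∈ Finset.range (L + 1), |p.coeff j| := by
  unfold polyNorm
  refine Finset.sum_subset (Finset.range_subset_range.mpr (by omega)) ?_
  intro j hj hj'
  simp only [Finset.mem_range, not_lt] at hj'
  rw [Polynomial.coeff_eq_zero_of_natDegree_lt (by omega), abs_zero]

lemma sum_even_terms {T : ℕ → ℝ} (n : ℕ) (h : ∀ k, Odd k → k < 2 * n + 1 → T k = 0) :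
    ∑ k ∈ Finset.range (2 * n + 1), T k = ∑ m ∈ Finset.range (n + 1), T (2 * m) := by
  induction n with
  | zero => simp
  | succ n ih =>
      have e : 2 * (n + 1) + 1 = (2 * n + 1) + 1 + 1 := by ring
      rw [e, Finset.sum_range_succ, Finset.sum_range_succ,
        ih (fun k hk hk' => h k hk (by omega)),
        h (2 * n + 1) ⟨n, by ring⟩ (by omega), Finset.sum_range_succ]
      have e2 : 2 * n + 1 + 1 = 2 * (n + 1) := by ring
      rw [e2, Finset.sum_range_succ, Finset.sum_range_succ]; ring

theorem stmt8 {Ω : Type*} [MeasurableSpace Ω] (P : Measure Ω) [IsProbabilityMeasure P]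
    (Y : Ω → ℝ) (hY : Measurable Y)
    (hsym : Measure.map Y P = Measure.map (fun ω => -Y ω) P)
    (hmom : ∀ n : ℕ, Integrable (fun ω => (Y ω) ^ n) P)
    (hY2 : ∫ ω, (Y ω) ^ 2 ∂P = 1) (hY4 : ∫ ω, (Y ω) ^ 4 ∂P = 3)
    (σ T : ℝ) (hσ : 0 ≤ σ) (hT : 0 < T) (L : ℕ) :
    ∃ C : ℝ, 0 ≤ C ∧ ∀ t ∈ Set.Icc (0 : ℝ) T, ∀ f : Polynomial ℝ, f.natDegree ≤ L →
      ∃ g : Polynomial ℝ, g.natDegree ≤ L ∧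
        (∀ x : ℝ, 0 ≤ x →
          ∫ ω, f.eval ((Real.sqrt x + Real.sqrt t * Y ω * σ / 2) ^ 2) ∂P = g.eval x) ∧
        polyNorm g ≤ (1 + C * t) * polyNorm f := by
  classical
  set M : ℕ → ℝ := fun k => ∫ ω, (Y ω) ^ k ∂P with hM
  -- odd moments vanish by symmetry
  have hodd : ∀ n : ℕ, Odd n → M n = 0 := by
    intro n hn
    have hpm : AEStronglyMeasurable (fun y : ℝ => y ^ n) (P.map Y) :=
      (measurable_id.pow_const n).aestronglyMeasurable
    have hpm2 : AEStronglyMeasurable (fun y : ℝ => y ^ n) (P.map (fun ω => -Y ω)) := by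
      rw [← hsym]; exact hpm
    have h1 : M n = ∫ y, y ^ n ∂(P.map Y) :=
      (integral_map hY.aemeasurable hpm).symm
    have h2 : ∫ y, y ^ n ∂(P.map Y) = ∫ ω, (-Y ω) ^ n ∂P := by
      rw [hsym]; exact integral_map (hY.neg.aemeasurable) hpm2
    have h3 : ∫ ω, (-Y ω) ^ n ∂P = - M n := by
      simp only [hn.neg_pow]
      exact integral_neg _
    have := h1.trans (h2.trans h3)
    linarith
  have hMnn : ∀ k : ℕ, 0 ≤ M (2 * k) := by
    intro k
    refine integral_nonneg fun ω => ?_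
    exact (even_two_mul k).pow_nonneg _
  have hM0 : M 0 = 1 := by simp [hM]
  set C : ℝ := ∑ n ∈ Finset.range (L + 1), ∑ j ∈ Finset.range n,
      (Nat.choose (2 * n) (2 * j) : ℝ) * (σ ^ 2 / 4) ^ (n - j) * T ^ (n - j - 1)
        * M (2 * (n - j)) with hC
  have hctermnn : ∀ n, 0 ≤ ∑ j ∈ Finset.range n,
      (Nat.choose (2 * n) (2 * j) : ℝ) * (σ ^ 2 / 4) ^ (n - j) * T ^ (n - j - 1)
        * M (2 * (n - j)) := by
    intro n
    refine Finset.sum_nonneg fun j _ => ?_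
    exact mul_nonneg (mul_nonneg (mul_nonneg (by positivity) (by positivity))
      (pow_nonneg hT.le _)) (hMnn _)
  have hCnn : 0 ≤ C := Finset.sum_nonneg fun n _ => hctermnn n
  refine ⟨C, hCnn, ?_⟩
  intro t ht f hf
  obtain ⟨ht0, htT⟩ := ht
  set d : ℕ → ℕ → ℝ := fun n m =>
    (Nat.choose (2 * n) (2 * m) : ℝ) * (t * σ ^ 2 / 4) ^ (n - m) * M (2 * (n - m)) with hd
  have hdnn : ∀ n m, 0 ≤ d n m := by
    intro n m
    exact mul_nonneg (mul_nonneg (by positivity)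
      (pow_nonneg (div_nonneg (mul_nonneg ht0 (sq_nonneg σ)) (by norm_num)) _)) (hMnn _)
  have expand : ∀ x : ℝ, ∀ n : ℕ, ∀ ω : Ω,
      (Real.sqrt x + Real.sqrt t * Y ω * σ / 2) ^ (2 * n)
      = ∑ k ∈ Finset.range (2 * n + 1),
          (Real.sqrt x ^ k * (Real.sqrt t * σ / 2) ^ (2 * n - k)
            * (Nat.choose (2 * n) k : ℝ)) * Y ω ^ (2 * n - k) := by
    intro x n ω
    rw [show Real.sqrt x + Real.sqrt t * Y ω * σ / 2
        = Real.sqrt x + (Real.sqrt t * σ / 2) * Y ω from by ring, add_pow]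
    refine Finset.sum_congr rfl fun k hk => ?_
    rw [mul_pow]
    ring
  have hInt : ∀ x : ℝ, ∀ n : ℕ,
      Integrable (fun ω => (Real.sqrt x + Real.sqrt t * Y ω * σ / 2) ^ (2 * n)) P := by
    intro x n
    exact (integrable_finset_sum _ fun k _ => ((hmom (2 * n - k)).const_mul _)).congr
      (Filter.Eventually.of_forall fun ω => (expand x n ω).symm)
  have key : ∀ x : ℝ, 0 ≤ x → ∀ n : ℕ,
      ∫ ω, (Real.sqrt x + Real.sqrt t * Y ω * σ / 2) ^ (2 * n) ∂P
      = ∑ m ∈ Finset.range (n + 1), d n m * x ^ m := by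
    intro x hx n
    have h1 : ∫ ω, (Real.sqrt x + Real.sqrt t * Y ω * σ / 2) ^ (2 * n) ∂P
        = ∑ k ∈ Finset.range (2 * n + 1),
            (Real.sqrt x ^ k * (Real.sqrt t * σ / 2) ^ (2 * n - k)
              * (Nat.choose (2 * n) k : ℝ)) * M (2 * n - k) := by
      rw [integral_congr_ae (Filter.Eventually.of_forall fun ω => expand x n ω),
        integral_finset_sum _ fun k _ => ((hmom (2 * n - k)).const_mul _)]
      exact Finset.sum_congr rfl fun k _ => integral_const_mul _ _
    rw [h1, sum_even_terms n ?_]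
    · refine Finset.sum_congr rfl fun m hm => ?_
      have hmn : m ≤ n := Nat.lt_succ_iff.mp (Finset.mem_range.mp hm)
      have e1 : 2 * n - 2 * m = 2 * (n - m) := by omega
      have e2 : Real.sqrt x ^ (2 * m) = x ^ m := by
        rw [pow_mul, Real.sq_sqrt hx]
      have e3 : (Real.sqrt t * σ / 2) ^ (2 * (n - m)) = (t * σ ^ 2 / 4) ^ (n - m) := by
        rw [pow_mul]
        congr 1
        rw [div_pow, mul_pow, Real.sq_sqrt ht0]
        norm_num
      rw [e1, e2, e3, hd]
      ring
    · intro k hk hk'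
      have : Odd (2 * n - k) := by
        rw [Nat.odd_iff] at hk ⊢
        omega
      rw [hodd _ this, mul_zero]
  set g : Polynomial ℝ := ∑ n ∈ Finset.range (L + 1), Polynomial.C (f.coeff n) *
      ∑ m ∈ Finset.range (n + 1), Polynomial.C (d n m) * Polynomial.X ^ m with hg
  have hdeg : g.natDegree ≤ L := by
    refine Polynomial.natDegree_sum_le_of_forall_le _ _ fun n hn => ?_
    have hn' : n ≤ L := Nat.lt_succ_iff.mp (Finset.mem_range.mp hn)
    refine le_trans (Polynomial.natDegree_C_mul_le _ _) ?_
    refine Polynomial.natDegree_sum_le_of_forall_le _ _ fun m hm => ?_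
    have hm' : m ≤ n := Nat.lt_succ_iff.mp (Finset.mem_range.mp hm)
    refine le_trans (Polynomial.natDegree_C_mul_le _ _) ?_
    simpa [Polynomial.natDegree_X_pow] using le_trans hm' hn'
  refine ⟨g, hdeg, ?_, ?_⟩
  · intro x hx
    have hfe : ∀ ω : Ω, f.eval ((Real.sqrt x + Real.sqrt t * Y ω * σ / 2) ^ 2)
        = ∑ n ∈ Finset.range (L + 1),
            f.coeff n * (Real.sqrt x + Real.sqrt t * Y ω * σ / 2) ^ (2 * n) := by
      intro ω
      rw [Polynomial.eval_eq_sum_range' (Nat.lt_succ_of_le hf)]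
      exact Finset.sum_congr rfl fun n _ => by rw [← pow_mul, mul_comm 2 n, pow_mul]
    rw [integral_congr_ae (Filter.Eventually.of_forall hfe),
      integral_finset_sum _ fun n _ => ((hInt x n).const_mul _)]
    simp only [hg, Polynomial.eval_finset_sum, Polynomial.eval_mul, Polynomial.eval_C,
      Polynomial.eval_pow, Polynomial.eval_X]
    refine Finset.sum_congr rfl fun n _ => ?_
    rw [integral_const_mul, key x hx n]
  · have hcoeff : ∀ j, g.coeff j
        = ∑ n ∈ Finset.range (L + 1), f.coeff n * (if j ≤ n then d n j else 0) := by
      intro j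
      simp only [hg, Polynomial.finset_sum_coeff, Polynomial.coeff_C_mul,
        Polynomial.coeff_X_pow, mul_ite, mul_one, mul_zero]
      refine Finset.sum_congr rfl fun n hn => ?_
      rw [Finset.sum_ite_eq (Finset.range (n + 1)) j (fun m => d n m)]
      simp only [Finset.mem_range, Nat.lt_succ_iff]
      split_ifs <;> simp
    have step1 : polyNorm g ≤ ∑ n ∈ Finset.range (L + 1), |f.coeff n| *
        ∑ j ∈ Finset.range (L + 1), (if j ≤ n then d n j else 0) := by
      rw [polyNorm_eq_of_le hdeg]
      calc ∑ j ∈ Finset.range (L + 1), |g.coeff j|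
          ≤ ∑ j ∈ Finset.range (L + 1), ∑ n ∈ Finset.range (L + 1),
              |f.coeff n| * (if j ≤ n then d n j else 0) := by
            refine Finset.sum_le_sum fun j _ => ?_
            rw [hcoeff j]
            refine le_trans (Finset.abs_sum_le_sum_abs _ _) ?_
            refine Finset.sum_le_sum fun n _ => ?_
            rw [abs_mul]
            refine mul_le_mul_of_nonneg_left ?_ (abs_nonneg _)
            rw [abs_of_nonneg]
            · split_ifs
              · exact hdnn n j
              · exact le_refl 0
        _ = _ := by
            rw [Finset.sum_comm]
            exact Finset.sum_congr rfl fun n _ => (Finset.mul_sum _ _ _).symm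
    have hinner : ∀ n, n ≤ L →
        ∑ j ∈ Finset.range (L + 1), (if j ≤ n then d n j else 0) ≤ 1 + C * t := by
      intro n hn
      have e1 : ∑ j ∈ Finset.range (L + 1), (if j ≤ n then d n j else 0)
          = ∑ j ∈ Finset.range (n + 1), d n j := by
        rw [← Finset.sum_subset (Finset.range_subset_range.mpr (show n + 1 ≤ L + 1 by omega))
          (fun j _ hj => if_neg (by simp only [Finset.mem_range, Nat.lt_succ_iff] at hj; omega))]
        exact Finset.sum_congr rfl fun j hj =>
          if_pos (Nat.lt_succ_iff.mp (Finset.mem_range.mp hj))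
      rw [e1, Finset.sum_range_succ]
      have hdnn1 : d n n = 1 := by
        simp [hd, hM0]
      rw [hdnn1]
      have h2 : ∑ j ∈ Finset.range n, d n j ≤ t * ∑ j ∈ Finset.range n,
          (Nat.choose (2 * n) (2 * j) : ℝ) * (σ ^ 2 / 4) ^ (n - j) * T ^ (n - j - 1)
            * M (2 * (n - j)) := by
        rw [Finset.mul_sum]
        refine Finset.sum_le_sum fun j hj => ?_
        have hjn : j < n := Finset.mem_range.mp hj
        have e : n - j = (n - j - 1) + 1 := by omega
        have hle : t ^ (n - j - 1) ≤ T ^ (n - j - 1) := pow_le_pow_left₀ ht0 htT _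
        have et : t ^ (n - j) = t * t ^ (n - j - 1) := by
          conv_lhs => rw [e]
          rw [pow_succ]; ring
        have hrw : d n j = t * ((Nat.choose (2 * n) (2 * j) : ℝ)
            * (σ ^ 2 / 4) ^ (n - j) * t ^ (n - j - 1) * M (2 * (n - j))) := by
          rw [hd]
          simp only
          rw [show t * σ ^ 2 / 4 = t * (σ ^ 2 / 4) from by ring, mul_pow, et]
          ring
        rw [hrw]
        refine mul_le_mul_of_nonneg_left ?_ ht0
        refine mul_le_mul_of_nonneg_right ?_ (hMnn _)
        refine mul_le_mul_of_nonneg_left hle (by positivity)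
      have h3 : ∑ j ∈ Finset.range n,
          (Nat.choose (2 * n) (2 * j) : ℝ) * (σ ^ 2 / 4) ^ (n - j) * T ^ (n - j - 1)
            * M (2 * (n - j)) ≤ C := by
        rw [hC]
        exact Finset.single_le_sum (f := fun n => ∑ j ∈ Finset.range n,
          (Nat.choose (2 * n) (2 * j) : ℝ) * (σ ^ 2 / 4) ^ (n - j) * T ^ (n - j - 1)
            * M (2 * (n - j))) (fun i _ => hctermnn i) (Finset.mem_range.mpr (by omega))
      nlinarith [mul_le_mul_of_nonneg_left h3 ht0]
    calc polyNorm g ≤ ∑ n ∈ Finset.range (L + 1), |f.coeff n| *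
        ∑ j ∈ Finset.range (L + 1), (if j ≤ n then d n j else 0) := step1
      _ ≤ ∑ n ∈ Finset.range (L + 1), |f.coeff n| * (1 + C * t) := by
          refine Finset.sum_le_sum fun n hn => ?_
          exact mul_le_mul_of_nonneg_left
            (hinner n (Nat.lt_succ_iff.mp (Finset.mem_range.mp hn))) (abs_nonneg _)
      _ = (1 + C * t) * polyNorm f := by
          rw [polyNorm_eq_of_le hf, ← Finset.sum_mul, mul_comm]
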